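/- For each y ∈ [0,1] and 1 ≤ i ≤ N−1: KA_i(y) = Σ_{n=1}^{i} S_n^{-1} KI_n(y) and KB_i(y) = Σ_{n=i+1}^{N} S_n^{-1} KI_n(y), where S_n = Σ_{j∈Ω} p_j/k_{n,j}. -/

import Mathlib

open Set

noncomputable section

/-- `T_ω = T_{ω_t} ∘ ⋯ ∘ T_{ω_1}` (head of the list applied first). -/
def rwordApply (T : ℕ → ℝ → ℝ) : List ℕ → ℝ → ℝ
  | [], y => y
  | j :: ω, y => rwordApply T ω (T j y)

/-- the weighted slope product `δ_ω(y,|ω|)`; `ι x` is the index of the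
partition interval containing `x`. -/
def rdelta (p : ℕ → ℝ) (k : ℕ → ℕ → ℝ) (ι : ℝ → ℕ) (T : ℕ → ℝ → ℝ) :
    List ℕ → ℝ → ℝ
  | [], _ => 1
  | j :: ω, y => p j / k (ι y) j * rdelta p k ι T ω (T j y)

/-- the random piecewise linear map with slopes `k`, intercepts `d`. -/
def Tpl (k d : ℕ → ℕ → ℝ) (ι : ℝ → ℕ) (j : ℕ) (x : ℝ) : ℝ :=
  k (ι x) j * x + d (ι x) j

/-- finite words with letters in `Ωs`. -/
def Words (Ωs : Set ℕ) : Type := {ω : List ℕ // ∀ j ∈ ω, j ∈ Ωs}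

/-- `KI_n(y) = Σ_{t≥1} Σ_{ω ∈ Ωᵗ} δ_ω(y,t)·1_{I_n}(T_{ω₁^{t-1}}(y))`. -/
def KI (Ωs : Set ℕ) (p : ℕ → ℝ) (k : ℕ → ℕ → ℝ) (ι : ℝ → ℕ) (T : ℕ → ℝ → ℝ)
    (n : ℕ) (y : ℝ) : ℝ :=
  ∑' ω : {ω : List ℕ // (∀ j ∈ ω, j ∈ Ωs) ∧ ω ≠ []},
    if ι (rwordApply T ω.1.dropLast y) = n then rdelta p k ι T ω.1 y else 0

/-- `KA_i(y) = Σ_{t≥0} Σ_{ω ∈ Ωᵗ} δ_ω(y,t)·1_{I_1 ∪ ⋯ ∪ I_i}(T_ω(y))`. -/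
def KA (Ωs : Set ℕ) (p : ℕ → ℝ) (k : ℕ → ℕ → ℝ) (ι : ℝ → ℕ) (T : ℕ → ℝ → ℝ)
    (i : ℕ) (y : ℝ) : ℝ :=
  ∑' ω : Words Ωs,
    if ι (rwordApply T ω.1 y) ≤ i then rdelta p k ι T ω.1 y else 0

/-- `KB_i(y) = Σ_{t≥0} Σ_{ω ∈ Ωᵗ} δ_ω(y,t)·1_{I_{i+1} ∪ ⋯ ∪ I_N}(T_ω(y))`. -/
def KB (Ωs : Set ℕ) (p : ℕ → ℝ) (k : ℕ → ℕ → ℝ) (ι : ℝ → ℕ) (T : ℕ → ℝ → ℝ)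
    (i : ℕ) (y : ℝ) : ℝ :=
  ∑' ω : Words Ωs,
    if i < ι (rwordApply T ω.1 y) then rdelta p k ι T ω.1 y else 0

/-- `S_n = Σ_{j∈Ω} p_j / k_{n,j}`, the average inverse slope on `I_n`. -/
def Sav (Ωs : Set ℕ) (p : ℕ → ℝ) (k : ℕ → ℕ → ℝ) (n : ℕ) : ℝ :=
  ∑' j : Ωs, p j.1 / k n j.1

/-! ### Auxiliary material -/

/-- words of a fixed length. -/
def Wlen (Ωs : Set ℕ) (t : ℕ) : Type :=
  {ω : List ℕ // (∀ j ∈ ω, j ∈ Ωs) ∧ ω.length = t}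

lemma rword_mem {T : ℕ → ℝ → ℝ} {Ωs : Set ℕ}
    (hT : ∀ j ∈ Ωs, ∀ x ∈ Icc (0:ℝ) 1, T j x ∈ Icc (0:ℝ) 1) :
    ∀ (ω : List ℕ), (∀ j ∈ ω, j ∈ Ωs) → ∀ y ∈ Icc (0:ℝ) 1,
      rwordApply T ω y ∈ Icc (0:ℝ) 1 := by
  intro ω
  induction ω with
  | nil => intro _ y hy; simpa [rwordApply] using hy
  | cons j ω ih =>
      intro h y hy
      exact ih (fun a ha => h a (List.mem_cons_of_mem _ ha)) _
        (hT j (h j List.mem_cons_self) y hy)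

lemma rdelta_concat (p : ℕ → ℝ) (k : ℕ → ℕ → ℝ) (ι : ℝ → ℕ) (T : ℕ → ℝ → ℝ) :
    ∀ (ω : List ℕ) (j : ℕ) (y : ℝ),
      rdelta p k ι T (ω ++ [j]) y
        = rdelta p k ι T ω y * (p j / k (ι (rwordApply T ω y)) j) := by
  intro ω
  induction ω with
  | nil => intro j y; simp [rdelta, rwordApply]
  | cons a ω ih =>
      intro j y
      show rdelta p k ι T (a :: (ω ++ [j])) y = _
      rw [rdelta, ih, rdelta]
      show _ = p a / k (ι y) a * rdelta p k ι T ω (T a y) *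
        (p j / k (ι (rwordApply T ω (T a y))) j)
      ring

/-- prepend a letter to a word of length `t`. -/
def wlenConsEquiv (Ωs : Set ℕ) (t : ℕ) : Ωs × Wlen Ωs t ≃ Wlen Ωs (t + 1) where
  toFun z := ⟨z.1.1 :: z.2.1, by
      constructor
      · intro j hj
        rcases List.mem_cons.1 hj with h | h
        · exact h ▸ z.1.2
        · exact z.2.2.1 j h
      · simp [z.2.2.2]⟩
  invFun ω :=
    (⟨ω.1.head (by
        intro h
        have := ω.2.2
        rw [h] at this
        simp at this), ω.2.1 _ (List.head_mem _)⟩,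
     ⟨ω.1.tail, by
        constructor
        · exact fun j hj => ω.2.1 j (List.mem_of_mem_tail hj)
        · have := ω.2.2
          cases hl : ω.1 with
          | nil => rw [hl] at this; simp at this
          | cons a l => rw [hl] at this; simp at this ⊢; omega⟩)
  left_inv z := by
    rcases z with ⟨⟨j, hj⟩, ⟨l, hl⟩⟩
    rfl
  right_inv ω := by
    rcases ω with ⟨l, hl⟩
    apply Subtype.ext
    exact List.cons_head_tail _

/-- a word is determined by its length and itself. -/
def wordsSigmaEquiv (Ωs : Set ℕ) : Words Ωs ≃ Σ t, Wlen Ωs t where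
  toFun ω := ⟨ω.1.length, ⟨ω.1, ω.2, rfl⟩⟩
  invFun x := ⟨x.2.1, x.2.2.1⟩
  left_inv ω := rfl
  right_inv x := by
    rcases x with ⟨t, ⟨l, h1, h2⟩⟩
    subst h2
    rfl

/-- a nonempty word splits into its initial part and its last letter. -/
def neWordsEquiv (Ωs : Set ℕ) :
    {ω : List ℕ // (∀ j ∈ ω, j ∈ Ωs) ∧ ω ≠ []} ≃ Words Ωs × Ωs where
  toFun ω :=
    (⟨ω.1.dropLast, fun j hj => ω.2.1 j ((List.dropLast_sublist _).subset hj)⟩,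
     ⟨ω.1.getLast ω.2.2, ω.2.1 _ (List.getLast_mem ω.2.2)⟩)
  invFun z := ⟨z.1.1 ++ [z.2.1], by
      constructor
      · intro j hj
        rcases List.mem_append.1 hj with h | h
        · exact z.1.2 j h
        · exact (List.mem_singleton.1 h) ▸ z.2.2
      · simp⟩
  left_inv ω := Subtype.ext (List.dropLast_append_getLast ω.2.2)
  right_inv z := by
    rcases z with ⟨⟨l, hl⟩, ⟨j, hj⟩⟩
    have h1 : (l ++ [j]).dropLast = l := by simp
    have h2 : (l ++ [j]).getLast (by simp) = j := by
      simp [List.getLast_append]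
    refine Prod.ext (Subtype.ext h1) (Subtype.ext ?_)
    exact h2

instance wlenZeroUnique (Ωs : Set ℕ) : Unique (Wlen Ωs 0) where
  default := ⟨[], by simp, rfl⟩
  uniq ω := by
    apply Subtype.ext
    have := ω.2.2
    exact List.length_eq_zero_iff.1 this

lemma summable_ite_abs {α : Type*} {f : α → ℝ} (hf : Summable fun a => |f a|)
    (c : α → Prop) [DecidablePred c] :
    Summable (fun a => if c a then f a else 0) := by
  apply Summable.of_abs
  apply hf.of_nonneg_of_le (fun a => abs_nonneg _)
  intro a
  by_cases h : c a <;> simp [h]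

lemma wlen_bound {Ωs : Set ℕ} {N : ℕ} {p : ℕ → ℝ} {ρ : ℝ} (hρ0 : 0 < ρ)
    (hp : ∀ j ∈ Ωs, 0 < p j) {k : ℕ → ℕ → ℝ} {ι : ℝ → ℕ} {T : ℕ → ℝ → ℝ}
    (hι : ∀ x ∈ Icc (0:ℝ) 1, ι x ∈ Finset.Icc 1 N)
    (hT : ∀ j ∈ Ωs, ∀ x ∈ Icc (0:ℝ) 1, T j x ∈ Icc (0:ℝ) 1)
    (hA2 : ∀ n ∈ Finset.Icc 1 N,
      Summable (fun j : Ωs => p j.1 / |k n j.1|) ∧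
        ∑' j : Ωs, p j.1 / |k n j.1| ≤ ρ) :
    ∀ t : ℕ, ∀ y ∈ Icc (0:ℝ) 1,
      Summable (fun ω : Wlen Ωs t => |rdelta p k ι T ω.1 y|) ∧
        ∑' ω : Wlen Ωs t, |rdelta p k ι T ω.1 y| ≤ ρ ^ t := by
  intro t
  induction t with
  | zero =>
      intro y hy
      constructor
      · exact Summable.of_finite
      · have : ∑' ω : Wlen Ωs 0, |rdelta p k ι T ω.1 y| = 1 := by
          rw [tsum_eq_single (default : Wlen Ωs 0)
            (fun b hb => absurd (Subsingleton.elim b default) hb)]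
          show |rdelta p k ι T [] y| = 1
          simp [rdelta]
        rw [this, pow_zero]
  | succ t ih =>
      intro y hy
      have hιy := hι y hy
      obtain ⟨hk_sum, hk_le⟩ := hA2 (ι y) hιy
      set e := wlenConsEquiv Ωs t with he
      have hTjy : ∀ j : Ωs, T j.1 y ∈ Icc (0:ℝ) 1 := fun j => hT j.1 j.2 y hy
      have key : ∀ z : Ωs × Wlen Ωs t,
          |rdelta p k ι T ((e z).1 : List ℕ) y|
            = (p z.1.1 / |k (ι y) z.1.1|) * |rdelta p k ι T z.2.1 (T z.1.1 y)| := by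
        intro z
        show |rdelta p k ι T (z.1.1 :: z.2.1) y| = _
        rw [rdelta, abs_mul, abs_div, abs_of_pos (hp _ z.1.2)]
      have hanneg : ∀ j : Ωs, 0 ≤ p j.1 / |k (ι y) j.1| :=
        fun j => div_nonneg (hp _ j.2).le (abs_nonneg _)
      have hfib : ∀ j : Ωs,
          Summable (fun ω : Wlen Ωs t =>
            (p j.1 / |k (ι y) j.1|) * |rdelta p k ι T ω.1 (T j.1 y)|) :=
        fun j => ((ih (T j.1 y) (hTjy j)).1).mul_left _
      have hfibsum : ∀ j : Ωs,
          (∑' ω : Wlen Ωs t, (p j.1 / |k (ι y) j.1|) * |rdelta p k ι T ω.1 (T j.1 y)|)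
            = (p j.1 / |k (ι y) j.1|) * ∑' ω : Wlen Ωs t, |rdelta p k ι T ω.1 (T j.1 y)| :=
        fun j => tsum_mul_left
      have hfibsum_le : ∀ j : Ωs,
          (∑' ω : Wlen Ωs t, (p j.1 / |k (ι y) j.1|) * |rdelta p k ι T ω.1 (T j.1 y)|)
            ≤ (p j.1 / |k (ι y) j.1|) * ρ ^ t := by
        intro j
        rw [hfibsum j]
        exact mul_le_mul_of_nonneg_left (ih (T j.1 y) (hTjy j)).2 (hanneg j)
      have hmaj : Summable (fun j : Ωs => (p j.1 / |k (ι y) j.1|) * ρ ^ t) :=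
        hk_sum.mul_right _
      have hcol : Summable (fun j : Ωs =>
          ∑' ω : Wlen Ωs t, (p j.1 / |k (ι y) j.1|) * |rdelta p k ι T ω.1 (T j.1 y)|) := by
        apply hmaj.of_nonneg_of_le
        · intro j
          exact tsum_nonneg (fun ω => mul_nonneg (hanneg j) (abs_nonneg _))
        · exact hfibsum_le
      have hprod : Summable (fun z : Ωs × Wlen Ωs t =>
          (p z.1.1 / |k (ι y) z.1.1|) * |rdelta p k ι T z.2.1 (T z.1.1 y)|) := by
        rw [summable_prod_of_nonneg (fun z => mul_nonneg (hanneg z.1) (abs_nonneg _))]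
        exact ⟨hfib, hcol⟩
      have hsum : Summable (fun ω : Wlen Ωs (t + 1) => |rdelta p k ι T ω.1 y|) := by
        rw [← e.summable_iff]
        exact hprod.congr fun z => (key z).symm
      refine ⟨hsum, ?_⟩
      rw [← e.tsum_eq (fun ω : Wlen Ωs (t + 1) => |rdelta p k ι T ω.1 y|)]
      calc (∑' z : Ωs × Wlen Ωs t, |rdelta p k ι T ((e z).1 : List ℕ) y|)
          = ∑' z : Ωs × Wlen Ωs t,
              (p z.1.1 / |k (ι y) z.1.1|) * |rdelta p k ι T z.2.1 (T z.1.1 y)| :=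
            tsum_congr key
        _ = ∑' j : Ωs, ∑' ω : Wlen Ωs t,
              (p j.1 / |k (ι y) j.1|) * |rdelta p k ι T ω.1 (T j.1 y)| :=
            Summable.tsum_prod' hprod hfib
        _ ≤ ∑' j : Ωs, (p j.1 / |k (ι y) j.1|) * ρ ^ t :=
            Summable.tsum_le_tsum hfibsum_le hcol hmaj
        _ = (∑' j : Ωs, p j.1 / |k (ι y) j.1|) * ρ ^ t := tsum_mul_right
        _ ≤ ρ * ρ ^ t := mul_le_mul_of_nonneg_right hk_le (pow_nonneg hρ0.le t)
        _ = ρ ^ (t + 1) := (pow_succ' ρ t).symm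

lemma words_abs_summable {Ωs : Set ℕ} {N : ℕ} {p : ℕ → ℝ} {ρ : ℝ}
    (hρ0 : 0 < ρ) (hρ1 : ρ < 1)
    (hp : ∀ j ∈ Ωs, 0 < p j) {k : ℕ → ℕ → ℝ} {ι : ℝ → ℕ} {T : ℕ → ℝ → ℝ}
    (hι : ∀ x ∈ Icc (0:ℝ) 1, ι x ∈ Finset.Icc 1 N)
    (hT : ∀ j ∈ Ωs, ∀ x ∈ Icc (0:ℝ) 1, T j x ∈ Icc (0:ℝ) 1)
    (hA2 : ∀ n ∈ Finset.Icc 1 N,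
      Summable (fun j : Ωs => p j.1 / |k n j.1|) ∧
        ∑' j : Ωs, p j.1 / |k n j.1| ≤ ρ)
    {y : ℝ} (hy : y ∈ Icc (0:ℝ) 1) :
    Summable (fun ω : Words Ωs => |rdelta p k ι T ω.1 y|) := by
  have hW := wlen_bound hρ0 hp hι hT hA2
  have hsig : Summable (fun x : Σ t, Wlen Ωs t => |rdelta p k ι T x.2.1 y|) := by
    rw [summable_sigma_of_nonneg (fun x => abs_nonneg _)]
    refine ⟨fun t => (hW t y hy).1, ?_⟩
    apply (summable_geometric_of_lt_one hρ0.le hρ1).of_nonneg_of_le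
    · intro t
      exact tsum_nonneg (fun ω => abs_nonneg _)
    · intro t
      exact (hW t y hy).2
  exact ((wordsSigmaEquiv Ωs).symm.summable_iff
    (f := fun ω : Words Ωs => |rdelta p k ι T ω.1 y|)).1 hsig

theorem stmt_3 (Ωs : Set ℕ) (N : ℕ) (hN : 2 ≤ N) (p : ℕ → ℝ) (ρ : ℝ)
    (hρ0 : 0 < ρ) (hρ1 : ρ < 1)
    (hp : ∀ j ∈ Ωs, 0 < p j) (hpsum : HasSum (fun j : Ωs => p j.1) 1)
    (k d : ℕ → ℕ → ℝ) (ι : ℝ → ℕ)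
    (hι : ∀ x ∈ Icc (0:ℝ) 1, ι x ∈ Finset.Icc 1 N)
    (hk : ∀ n ∈ Finset.Icc 1 N, ∀ j ∈ Ωs, k n j ≠ 0)
    (hT : ∀ j ∈ Ωs, ∀ x ∈ Icc (0:ℝ) 1, Tpl k d ι j x ∈ Icc (0:ℝ) 1)
    (hA2 : ∀ n ∈ Finset.Icc 1 N,
      Summable (fun j : Ωs => p j.1 / |k n j.1|) ∧
        ∑' j : Ωs, p j.1 / |k n j.1| ≤ ρ)
    (hS : ∀ n ∈ Finset.Icc 1 N, Sav Ωs p k n ≠ 0) :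
    ∀ y ∈ Icc (0:ℝ) 1, ∀ i ∈ Finset.Icc 1 (N - 1),
      KA Ωs p k ι (Tpl k d ι) i y =
          ∑ n ∈ Finset.Icc 1 i, (Sav Ωs p k n)⁻¹ * KI Ωs p k ι (Tpl k d ι) n y ∧
      KB Ωs p k ι (Tpl k d ι) i y =
          ∑ n ∈ Finset.Icc (i + 1) N, (Sav Ωs p k n)⁻¹ * KI Ωs p k ι (Tpl k d ι) n y := by
  intro y hy i hi
  rw [Finset.mem_Icc] at hi
  set T := Tpl k d ι with hTdef
  have habs : Summable (fun ω : Words Ωs => |rdelta p k ι T ω.1 y|) :=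
    words_abs_summable hρ0 hρ1 hp hι hT hA2 hy
  have hFs : ∀ n : ℕ, Summable (fun ω : Words Ωs =>
      if ι (rwordApply T ω.1 y) = n then rdelta p k ι T ω.1 y else 0) :=
    fun n => summable_ite_abs habs _
  have hmemι : ∀ ω : Words Ωs, ι (rwordApply T ω.1 y) ∈ Finset.Icc 1 N :=
    fun ω => hι _ (rword_mem hT ω.1 ω.2 y hy)
  -- the key identity : `S_n⁻¹ KI_n = F_n`
  have hKI : ∀ n ∈ Finset.Icc 1 N,
      (Sav Ωs p k n)⁻¹ * KI Ωs p k ι T n y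
        = ∑' ω : Words Ωs,
            if ι (rwordApply T ω.1 y) = n then rdelta p k ι T ω.1 y else 0 := by
    intro n hn
    have hgabs : Summable (fun j : Ωs => ‖p j.1 / k n j.1‖) := by
      have h := (hA2 n hn).1
      have : (fun j : Ωs => ‖p j.1 / k n j.1‖) = fun j : Ωs => p j.1 / |k n j.1| := by
        funext j
        rw [Real.norm_eq_abs, abs_div, abs_of_pos (hp j.1 j.2)]
      rw [this]
      exact h
    have hfabs : Summable (fun ω : Words Ωs =>
        ‖if ι (rwordApply T ω.1 y) = n then rdelta p k ι T ω.1 y else 0‖) := by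
      apply habs.of_nonneg_of_le (fun ω => norm_nonneg _)
      intro ω
      rw [Real.norm_eq_abs]
      by_cases h : ι (rwordApply T ω.1 y) = n <;> simp [h]
    have hmul := tsum_mul_tsum_of_summable_norm hfabs hgabs
    have hKIeq : KI Ωs p k ι T n y
        = (∑' ω : Words Ωs,
            if ι (rwordApply T ω.1 y) = n then rdelta p k ι T ω.1 y else 0)
          * Sav Ωs p k n := by
      rw [KI, ← Equiv.tsum_eq (neWordsEquiv Ωs).symm]
      have hz : ∀ z : Words Ωs × Ωs,
          (if ι (rwordApply T (((neWordsEquiv Ωs).symm z).1).dropLast y) = n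
            then rdelta p k ι T ((neWordsEquiv Ωs).symm z).1 y else 0)
          = (if ι (rwordApply T z.1.1 y) = n then rdelta p k ι T z.1.1 y else 0)
              * (p z.2.1 / k n z.2.1) := by
        intro z
        have h1 : ((neWordsEquiv Ωs).symm z).1 = z.1.1 ++ [z.2.1] := rfl
        rw [h1]
        have h2 : (z.1.1 ++ [z.2.1]).dropLast = z.1.1 := by simp
        rw [h2, rdelta_concat]
        by_cases hc : ι (rwordApply T z.1.1 y) = n
        · rw [if_pos hc, if_pos hc, hc]
        · rw [if_neg hc, if_neg hc, zero_mul]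
      rw [tsum_congr hz, ← hmul]
      rfl
    rw [hKIeq, mul_comm _ (Sav Ωs p k n), ← mul_assoc,
      inv_mul_cancel₀ (hS n hn), one_mul]
  constructor
  · rw [KA]
    have h1 : ∀ ω : Words Ωs,
        (if ι (rwordApply T ω.1 y) ≤ i then rdelta p k ι T ω.1 y else 0)
          = ∑ n ∈ Finset.Icc 1 i,
              (if ι (rwordApply T ω.1 y) = n then rdelta p k ι T ω.1 y else 0) := by
      intro ω
      have hm := hmemι ω
      rw [Finset.mem_Icc] at hm
      rw [Finset.sum_ite_eq]
      by_cases h : ι (rwordApply T ω.1 y) ≤ i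
      · rw [if_pos h, if_pos (Finset.mem_Icc.2 ⟨hm.1, h⟩)]
      · rw [if_neg h, if_neg (fun hc => h (Finset.mem_Icc.1 hc).2)]
    rw [tsum_congr h1, Summable.tsum_finsetSum (fun n _ => hFs n)]
    refine Finset.sum_congr rfl fun n hn => ?_
    rw [Finset.mem_Icc] at hn
    rw [hKI n (Finset.mem_Icc.2 ⟨hn.1, by omega⟩)]
  · rw [KB]
    have h1 : ∀ ω : Words Ωs,
        (if i < ι (rwordApply T ω.1 y) then rdelta p k ι T ω.1 y else 0)
          = ∑ n ∈ Finset.Icc (i + 1) N,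
              (if ι (rwordApply T ω.1 y) = n then rdelta p k ι T ω.1 y else 0) := by
      intro ω
      have hm := hmemι ω
      rw [Finset.mem_Icc] at hm
      rw [Finset.sum_ite_eq]
      by_cases h : i < ι (rwordApply T ω.1 y)
      · rw [if_pos h, if_pos (Finset.mem_Icc.2 ⟨h, hm.2⟩)]
      · rw [if_neg h, if_neg (fun hc => h (Finset.mem_Icc.1 hc).1)]
    rw [tsum_congr h1, Summable.tsum_finsetSum (fun n _ => hFs n)]
    refine Finset.sum_congr rfl fun n hn => ?_
    rw [Finset.mem_Icc] at hn
    rw [hKI n (Finset.mem_Icc.2 ⟨by omega, hn.2⟩)]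

end
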